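/- arXiv:2007.04714 — 3 statements merged into one kernel-verified Lean document; each statement's English description precedes it below -/
import Mathlib

section
/- Symmetry of the two-variable one-column factorial generating function (vertical-strip lemma used in the proof of Proposition 4.3(iii)): for every m ≥ 0, every commutative ring A, all u, v ∈ A and every doubly infinite family a = (a_t)_{t∈ℤ} in A, the sum Σ_{p=0}^{m} ( ∏_{i=1}^{p} (u − a_{1−i}) ) · ( ∏_{i=p+1}^{m} (v − a_{−i}) ) is symmetric in u and v, i.e. it is unchanged when u and v are interchanged. -/
open Finset

private lemma shift_prod {A : Type*} [CommRing A] (f : ℕ → A) (a b : ℕ) :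
    ∏ k ∈ Icc (a + 1) (b + 1), f k = ∏ k ∈ Icc a b, f (k + 1) := by
  rw [← Finset.Ico_add_one_right_eq_Icc, ← Finset.Ico_add_one_right_eq_Icc, Finset.prod_Ico_eq_prod_range,
    Finset.prod_Ico_eq_prod_range]
  have h : b + 1 + 1 - (a + 1) = b + 1 - a := by omega
  rw [h]
  exact Finset.prod_congr rfl fun i _ => by congr 1; omega

private lemma key_telescope {A : Type*} [CommRing A] (m : ℕ) (u v : A) (c : ℕ → A) :
    (u - v) * ∑ p ∈ range (m + 1),
        (∏ k ∈ range p, (u - c k)) * ∏ k ∈ Icc (p + 1) m, (v - c k)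
      = ∏ k ∈ range (m + 1), (u - c k) - ∏ k ∈ range (m + 1), (v - c k) := by
  induction m with
  | zero => simp
  | succ m ih =>
    rw [Finset.sum_range_succ]
    have h1 : ∀ p ∈ range (m + 1),
        (∏ k ∈ range p, (u - c k)) * ∏ k ∈ Icc (p + 1) (m + 1), (v - c k)
          = ((∏ k ∈ range p, (u - c k)) * ∏ k ∈ Icc (p + 1) m, (v - c k)) * (v - c (m + 1)) := by
      intro p hp
      have hp' := Finset.mem_range.mp hp
      rw [Finset.prod_Icc_succ_top (by omega)]
      ring
    rw [Finset.sum_congr rfl h1, ← Finset.sum_mul]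
    have h2 : Icc (m + 1 + 1) (m + 1) = ∅ := Finset.Icc_eq_empty (by omega)
    rw [h2, Finset.prod_empty, mul_one, Finset.prod_range_succ (fun k => u - c k) (m + 1),
      Finset.prod_range_succ (fun k => v - c k) (m + 1)]
    linear_combination (v - c (m + 1)) * ih

private lemma symS {A : Type*} [CommRing A] (m : ℕ) (u v : A) (b : ℕ → A) :
    ∑ p ∈ range (m + 1), (∏ k ∈ range p, (u - b k)) * ∏ k ∈ Icc (p + 1) m, (v - b k)
      = ∑ p ∈ range (m + 1), (∏ k ∈ range p, (v - b k)) * ∏ k ∈ Icc (p + 1) m, (u - b k) := by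
  induction m generalizing b with
  | zero => simp
  | succ m ih =>
    have hIcc : Icc 0 m = range (m + 1) := by ext x; simp
    have step : ∀ w z : A,
        ∑ p ∈ range (m + 1 + 1),
            (∏ k ∈ range p, (w - b k)) * ∏ k ∈ Icc (p + 1) (m + 1), (z - b k)
          = (∏ k ∈ range (m + 1), (z - b (k + 1)))
            + (w - b 0) * ∑ p ∈ range (m + 1),
                (∏ k ∈ range p, (w - b (k + 1))) * ∏ k ∈ Icc (p + 1) m, (z - b (k + 1)) := by
      intro w z
      rw [Finset.sum_range_succ']
      have h0 : (∏ k ∈ range 0, (w - b k)) * ∏ k ∈ Icc (0 + 1) (m + 1), (z - b k)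
          = ∏ k ∈ range (m + 1), (z - b (k + 1)) := by
        rw [Finset.prod_range_zero, one_mul, shift_prod, hIcc]
      have hterm : ∀ q ∈ range (m + 1),
          (∏ k ∈ range (q + 1), (w - b k)) * ∏ k ∈ Icc (q + 1 + 1) (m + 1), (z - b k)
            = (w - b 0) * ((∏ k ∈ range q, (w - b (k + 1))) * ∏ k ∈ Icc (q + 1) m, (z - b (k + 1))) := by
        intro q hq
        rw [Finset.prod_range_succ', shift_prod]
        ring
      rw [Finset.sum_congr rfl hterm, ← Finset.mul_sum, h0]
      ring
    rw [step u v, step v u]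
    linear_combination key_telescope m u v (fun k => b (k + 1))
      + (v - b 0) * ih (fun k => b (k + 1))

/-- **Vertical-strip lemma** (symmetry of the two-variable one-column factorial
generating function, used in the proof of Proposition 4.3(iii)): for every `m ≥ 0`,
every commutative ring `A`, all `u, v ∈ A` and every doubly infinite family
`a = (a_t)_{t∈ℤ}` in `A`, the sum
`Σ_{p=0}^{m} (∏_{i=1}^{p} (u − a_{1−i})) · (∏_{i=p+1}^{m} (v − a_{−i}))`
is unchanged when `u` and `v` are interchanged. -/
theorem vertical_strip_symmetric {A : Type*} [CommRing A] (m : ℕ) (u v : A) (a : ℤ → A) :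
    ∑ p ∈ Finset.range (m + 1),
        (∏ i ∈ Finset.Icc 1 p, (u - a (1 - (i : ℤ)))) *
          ∏ i ∈ Finset.Icc (p + 1) m, (v - a (-(i : ℤ))) =
      ∑ p ∈ Finset.range (m + 1),
        (∏ i ∈ Finset.Icc 1 p, (v - a (1 - (i : ℤ)))) *
          ∏ i ∈ Finset.Icc (p + 1) m, (u - a (-(i : ℤ))) := by
  have conv : ∀ (w : A) (p : ℕ),
      ∏ i ∈ Icc 1 p, (w - a (1 - (i : ℤ))) = ∏ k ∈ range p, (w - a (-(k : ℤ))) := by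
    intro w p
    rw [← Finset.Ico_add_one_right_eq_Icc, Finset.prod_Ico_eq_prod_range]
    have h : p + 1 - 1 = p := by omega
    rw [h]
    exact Finset.prod_congr rfl fun k _ => by congr 2; push_cast; ring
  simp only [conv]
  exact symS m u v (fun k => a (-(k : ℤ)))
end

section
/- Two-filling enumeration for ribbons: let θ be a nonempty ribbon, i.e. a nonempty edgewise-connected skew Young diagram containing no 2×2 block of boxes, and let R′ be a marked alphabet on R = {1,2} with exactly one unprimed letter and one primed letter (in either order, so that either 1 is unprimed and 2 is primed, or 1 is primed and 2 is unprimed). Then the set 𝒯^{θ}_{R′} of skew supertableaux of shape θ over R′ has exactly two elements. -/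
namespace SuperSchur

variable {A : Type*} [CommRing A]

/-- The content of a box `(i, j)` (rows and columns indexed from 0;
row `i` occupies columns `μ_i ≤ j < λ_i`, so the content is `j - i`). -/
def content (p : ℕ × ℕ) : ℤ := (p.2 : ℤ) - (p.1 : ℤ)

/-- The cells of the skew Young diagram `F^{λ/μ}` (0-indexed rows and columns). -/
def cells (lam mu : List ℕ) : Finset (ℕ × ℕ) :=
  (Finset.range lam.length).biUnion fun i =>
    (Finset.Ico (mu.getD i 0) (lam.getD i 0)).image fun j => (i, j)

/-- `l` is a partition: a weakly decreasing list of positive integers. -/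
def IsPartition (l : List ℕ) : Prop := l.Pairwise (· ≥ ·) ∧ ∀ x ∈ l, 0 < x

/-- `μ ⊆ λ`. -/
def Contained (mu lam : List ℕ) : Prop := ∀ i, mu.getD i 0 ≤ lam.getD i 0

/-- `T` is a skew supertableau on the cell set `C` over the marked alphabet `Fin NA`
(letters in their natural order), where `prm r = true` means the letter `r` is primed:
entries weakly increase along rows and down columns, no two equal unprimed entries lie
in the same column, and no two equal primed entries lie in the same row. -/
def IsSuperTab {NA : ℕ} (C : Finset (ℕ × ℕ)) (prm : Fin NA → Bool)
    (T : {p // p ∈ C} → Fin NA) : Prop :=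
  (∀ u v : {p // p ∈ C}, u.1.1 = v.1.1 → u.1.2 ≤ v.1.2 → T u ≤ T v) ∧
  (∀ u v : {p // p ∈ C}, u.1.2 = v.1.2 → u.1.1 ≤ v.1.1 → T u ≤ T v) ∧
  (∀ u v : {p // p ∈ C}, u.1.2 = v.1.2 → u.1.1 ≠ v.1.1 → prm (T u) = false → T u ≠ T v) ∧
  (∀ u v : {p // p ∈ C}, u.1.1 = v.1.1 → u.1.2 ≠ v.1.2 → prm (T u) = true → T u ≠ T v)

open Classical in
/-- Generic weighted sum over all skew supertableaux on `C`: the weight of the letter `r`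
placed in a box of content `c` is `w r c`. -/
noncomputable def tabSum {NA : ℕ} (C : Finset (ℕ × ℕ)) (prm : Fin NA → Bool)
    (w : Fin NA → ℤ → A) : A :=
  ∑ T ∈ Finset.univ.filter (fun T : {p // p ∈ C} → Fin NA => IsSuperTab C prm T),
    ∏ u : {p // p ∈ C}, w (T u) (content u.1)

/-- The (1-based) index of the letter `r` among the letters with the same marking:
if `r` is the k-th smallest unprimed letter then `idx prm r = k`, and similarly
for primed letters. -/
def idx {NA : ℕ} (prm : Fin NA → Bool) (r : Fin NA) : ℕ :=
  (Finset.univ.filter fun r' => prm r' = prm r ∧ r' ≤ r).card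

/-- `σ(r) = #{i ∈ M : i ≤ r} - #{j ∈ N : j ≤ r}`, plus `1` if `r` is primed. -/
def sigma {NA : ℕ} (prm : Fin NA → Bool) (r : Fin NA) : ℤ :=
  ((Finset.univ.filter fun r' : Fin NA => prm r' = false ∧ r' ≤ r).card : ℤ)
    - ((Finset.univ.filter fun r' : Fin NA => prm r' = true ∧ r' ≤ r).card : ℤ)
    + (if prm r then 1 else 0)

/-- Ninth-variation weights: the k-th unprimed letter in a box of content `c`
carries weight `X k c`, and the ℓ-th primed letter carries `Y ℓ c`. -/
def wNinth {m n NA : ℕ} (prm : Fin NA → Bool) (X : Fin m → ℤ → A) (Y : Fin n → ℤ → A) :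
    Fin NA → ℤ → A := fun r c =>
  if prm r then (if h : idx prm r - 1 < n then Y ⟨idx prm r - 1, h⟩ c else 0)
  else (if h : idx prm r - 1 < m then X ⟨idx prm r - 1, h⟩ c else 0)

/-- Factorial supersymmetric weights: the k-th unprimed letter `r` in a box of content `c`
carries weight `x k + a (σ(r) + c)`, and the ℓ-th primed letter `r` carries
`y ℓ - a (σ(r) + c)`. -/
def wFact {m n NA : ℕ} (prm : Fin NA → Bool) (x : Fin m → A) (y : Fin n → A) (a : ℤ → A) :
    Fin NA → ℤ → A := fun r c =>
  if prm r then
    (if h : idx prm r - 1 < n then y ⟨idx prm r - 1, h⟩ else 0) - a (sigma prm r + c)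
  else
    (if h : idx prm r - 1 < m then x ⟨idx prm r - 1, h⟩ else 0) + a (sigma prm r + c)

/-- The marked alphabet `1 < 2 < ⋯ < m < 1′ < 2′ < ⋯ < n′`. -/
def prmFirst (m n : ℕ) : Fin (m + n) → Bool := fun r => decide (m ≤ (r : ℕ))

/-- The classical (first variation) supersymmetric skew Schur function `s_{λ/μ}(x,y)`. -/
noncomputable def superSchur (lam mu : List ℕ) {m n : ℕ} (x : Fin m → A) (y : Fin n → A) : A :=
  tabSum (cells lam mu) (prmFirst m n) (wNinth (prmFirst m n) (fun k _ => x k) (fun l _ => y l))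

/-- The row (counted from the top, 0-based) of the box of content `c` in the canonical
realisation of the segment of the cutting strip ending at content `d`:
the number of vertical steps strictly between `c` and `d`. -/
noncomputable def ribRow (dir : ℤ → Bool) (d c : ℤ) : ℕ :=
  ((Finset.Ioc c d).filter fun c' => dir c' = true).card

/-- The shift `m(p,q)`: the content (within the cutting strip) of the box of the ribbon
`φ_{ad}` that lies on the main diagonal of the skew diagram whose outer rim is `φ_{ad}`. -/
noncomputable def mShift (dir : ℤ → Bool) (a d : ℤ) : ℤ := a + (ribRow dir d a : ℤ)

/-- The ribbon `φ_{ad}` of the cutting strip, realised canonically as a skew diagram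
in its own right (its box of cutting-strip content `c` gets standard content
`c - mShift dir a d`). -/
noncomputable def ribbonCells (dir : ℤ → Bool) (a d : ℤ) : Finset (ℕ × ℕ) :=
  (Finset.Icc a d).image fun c =>
    (ribRow dir d c, (c + (ribRow dir d c : ℤ) - mShift dir a d).toNat)

/-- The cell set `S` coincides in shape and contents with the segment `φ_{ab}` of the
cutting strip described by `dir` (where `dir c = true` iff the box of content `c - 1`
lies below the box of content `c`, and `dir c = false` iff it lies to its left). -/
def StripMatches (dir : ℤ → Bool) (a b : ℤ) (S : Finset (ℕ × ℕ)) : Prop :=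
  (∀ c : ℤ, (a ≤ c ∧ c ≤ b) ↔ ∃ u ∈ S, content u = c) ∧
  (∀ u ∈ S, ∀ v ∈ S, content u = content v → u = v) ∧
  (∀ u ∈ S, ∀ v ∈ S, content v = content u + 1 →
    if dir (content v) then v.1 + 1 = u.1 ∧ v.2 = u.2 else v.1 = u.1 ∧ u.2 + 1 = v.2)

/-- `(dir, ab, θ)` is an outside decomposition of `F^{λ/μ}`: the strips `θ p` are
pairwise disjoint with union the whole diagram, each `θ p` coincides in shape
and contents with the segment `φ_{(ab p).1, (ab p).2}` of the common cutting strip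
described by `dir`, the starting box of each strip lies on the left or bottom boundary,
the ending box of each strip lies on the right or top boundary, and the cutting strip
contains a box of every relevant content occurring in the diagram. -/
def OutsideDecomp (lam mu : List ℕ) {s : ℕ} (dir : ℤ → Bool)
    (ab : Fin s → ℤ × ℤ) (θ : Fin s → Finset (ℕ × ℕ)) : Prop :=
  (∀ p q : Fin s, p ≠ q → Disjoint (θ p) (θ q)) ∧
  (Finset.univ.biUnion θ = cells lam mu) ∧
  (∀ p : Fin s, StripMatches dir (ab p).1 (ab p).2 (θ p)) ∧
  (∀ p : Fin s, ∀ u ∈ θ p, content u = (ab p).1 →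
    u.2 = 0 ∨ (u.1, u.2 - 1) ∉ cells lam mu ∨ (u.1 + 1, u.2) ∉ cells lam mu) ∧
  (∀ p : Fin s, ∀ u ∈ θ p, content u = (ab p).2 →
    (u.1, u.2 + 1) ∉ cells lam mu ∨ u.1 = 0 ∨ (u.1 - 1, u.2) ∉ cells lam mu) ∧
  (∀ p q : Fin s, ∀ c : ℤ, (ab p).1 ≤ c → c ≤ (ab q).2 → ∃ u ∈ cells lam mu, content u = c)

/-- Two boxes are edgewise adjacent. -/
def CellAdj (u v : ℕ × ℕ) : Prop :=
  (u.1 = v.1 ∧ (u.2 + 1 = v.2 ∨ v.2 + 1 = u.2)) ∨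
  (u.2 = v.2 ∧ (u.1 + 1 = v.1 ∨ v.1 + 1 = u.1))

/-- `C` is edgewise connected. -/
def ConnectedCells (C : Finset (ℕ × ℕ)) : Prop :=
  ∀ u ∈ C, ∀ v ∈ C,
    Relation.ReflTransGen (fun p q => p ∈ C ∧ q ∈ C ∧ CellAdj p q) u v

/-- `C` contains no 2×2 block of boxes. -/
def NoTwoByTwo (C : Finset (ℕ × ℕ)) : Prop :=
  ∀ i j : ℕ, ¬((i, j) ∈ C ∧ (i + 1, j) ∈ C ∧ (i, j + 1) ∈ C ∧ (i + 1, j + 1) ∈ C)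

/-- `C` is a ribbon: nonempty, edgewise connected, with no 2×2 block of boxes. -/
def IsRibbon (C : Finset (ℕ × ℕ)) : Prop :=
  C.Nonempty ∧ ConnectedCells C ∧ NoTwoByTwo C

/-- `T` is an ordered Young tableau on `C`: entries weakly increase along rows and
down columns, and strictly increase down diagonals. -/
def IsOYT {nL : ℕ} (C : Finset (ℕ × ℕ)) (T : {p // p ∈ C} → Fin nL) : Prop :=
  (∀ u v : {p // p ∈ C}, u.1.1 = v.1.1 → u.1.2 ≤ v.1.2 → T u ≤ T v) ∧
  (∀ u v : {p // p ∈ C}, u.1.2 = v.1.2 → u.1.1 ≤ v.1.1 → T u ≤ T v) ∧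
  (∀ u v : {p // p ∈ C}, u.1.1 + 1 = v.1.1 → u.1.2 + 1 = v.1.2 → T u < T v)

/-- The number `h(T)` of horizontally adjacent pairs of equal entries. -/
def horizPairs {nL : ℕ} (C : Finset (ℕ × ℕ)) (T : {p // p ∈ C} → Fin nL) : ℕ :=
  (Finset.univ.filter fun uv : {p // p ∈ C} × {p // p ∈ C} =>
    uv.1.1.1 = uv.2.1.1 ∧ uv.1.1.2 + 1 = uv.2.1.2 ∧ T uv.1 = T uv.2).card

/-- The number `v(T)` of vertically adjacent pairs of equal entries. -/
def vertPairs {nL : ℕ} (C : Finset (ℕ × ℕ)) (T : {p // p ∈ C} → Fin nL) : ℕ :=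
  (Finset.univ.filter fun uv : {p // p ∈ C} × {p // p ∈ C} =>
    uv.1.1.2 = uv.2.1.2 ∧ uv.1.1.1 + 1 = uv.2.1.1 ∧ T uv.1 = T uv.2).card

open Classical in
/-- Bachmann's ordered-Young-tableau Schur function of the cell set `C`. -/
noncomputable def bacSum (C : Finset (ℕ × ℕ)) {nL : ℕ} (F : Fin nL → ℤ → A) (t : A) : A :=
  ∑ T ∈ Finset.univ.filter (fun T : {p // p ∈ C} → Fin nL => IsOYT C T),
    t ^ vertPairs C T * (1 - t) ^ horizPairs C T *
      ∏ u : {p // p ∈ C}, F (T u) (content u.1)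

/-- Molev's factorial supersymmetric weights on the alphabet
`n′ < ⋯ < 2′ < 1′ < 1 < 2 < ⋯ < m` (position `p < n` is the letter `(n-p)′`,
position `n + k - 1` is the letter `k`): the letter `k` in a box of content `c`
carries weight `x k + a (k + c)` and the letter `ℓ′` carries `y ℓ - a (ℓ + c)`. -/
def wMol {m n : ℕ} (x : Fin m → A) (y : Fin n → A) (a : ℤ → A) : Fin (m + n) → ℤ → A :=
  fun r c =>
    if h : (r : ℕ) < n then
      y ⟨n - 1 - (r : ℕ), by omega⟩ - a (((n : ℤ) - ((r : ℕ) : ℤ)) + c)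
    else
      x ⟨(r : ℕ) - n, by have := r.isLt; omega⟩ + a ((((r : ℕ) : ℤ) - (n : ℤ) + 1) + c)

/-! ### Auxiliary lemmas for the two-filling enumeration -/

section TwoFillings

private lemma mem_cells' {lam mu : List ℕ} {i j : ℕ} :
    (i, j) ∈ cells lam mu ↔ i < lam.length ∧ mu.getD i 0 ≤ j ∧ j < lam.getD i 0 := by
  simp only [cells, Finset.mem_biUnion, Finset.mem_range, Finset.mem_image, Finset.mem_Ico,
    Prod.mk.injEq]
  constructor
  · rintro ⟨i', hi', j', hj', rfl, rfl⟩
    exact ⟨hi', hj'⟩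
  · rintro ⟨hi, hj⟩
    exact ⟨i, hi, j, hj, rfl, rfl⟩

private lemma getD_anti' {l : List ℕ} (h : l.Pairwise (· ≥ ·)) {a b : ℕ} (hab : a ≤ b) :
    l.getD b 0 ≤ l.getD a 0 := by
  rcases lt_or_ge b l.length with hb | hb
  · have ha : a < l.length := lt_of_le_of_lt hab hb
    rcases eq_or_lt_of_le hab with rfl | hab'
    · exact le_refl _
    · rw [List.getD_eq_getElem _ _ hb, List.getD_eq_getElem _ _ ha]
      exact List.pairwise_iff_get.mp h ⟨a, ha⟩ ⟨b, hb⟩ hab'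
  · rw [List.getD_eq_default _ _ hb]
    exact Nat.zero_le _

private lemma rect' {lam mu : List ℕ} (hlam : lam.Pairwise (· ≥ ·)) (hmu : mu.Pairwise (· ≥ ·))
    {i j i' j' i'' j'' : ℕ}
    (h1 : (i, j) ∈ cells lam mu) (h2 : (i', j') ∈ cells lam mu)
    (h3 : i ≤ i'') (h4 : i'' ≤ i') (h5 : j ≤ j'') (h6 : j'' ≤ j') :
    (i'', j'') ∈ cells lam mu := by
  rw [mem_cells'] at h1 h2 ⊢
  refine ⟨lt_of_le_of_lt h4 h2.1, le_trans (getD_anti' hmu h3) (le_trans h1.2.1 h5),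
    lt_of_lt_of_le (lt_of_le_of_lt h6 h2.2.2) (getD_anti' hlam h4)⟩

private lemma content_inj' {lam mu : List ℕ} (hlam : lam.Pairwise (· ≥ ·))
    (hmu : mu.Pairwise (· ≥ ·)) (no2 : NoTwoByTwo (cells lam mu)) {u v : ℕ × ℕ}
    (hu : u ∈ cells lam mu) (hv : v ∈ cells lam mu) (h : content u = content v) : u = v := by
  obtain ⟨a, b⟩ := u; obtain ⟨c, d⟩ := v
  simp only [content] at h
  rcases lt_trichotomy a c with hac | rfl | hac
  · have hbd : b + 1 ≤ d := by omega
    exact absurd ⟨hu, rect' hlam hmu hu hv (by omega) (by omega) (by omega) (by omega),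
      rect' hlam hmu hu hv (by omega) (by omega) (by omega) (by omega),
      rect' hlam hmu hu hv (by omega) (by omega) (by omega) (by omega)⟩ (no2 a b)
  · have : b = d := by omega
    subst this; rfl
  · have hbd : d + 1 ≤ b := by omega
    exact absurd ⟨hv, rect' hlam hmu hv hu (by omega) (by omega) (by omega) (by omega),
      rect' hlam hmu hv hu (by omega) (by omega) (by omega) (by omega),
      rect' hlam hmu hv hu (by omega) (by omega) (by omega) (by omega)⟩ (no2 c d)

private lemma succ_adj' {lam mu : List ℕ} (hlam : lam.Pairwise (· ≥ ·))
    (hmu : mu.Pairwise (· ≥ ·)) (no2 : NoTwoByTwo (cells lam mu)) {u v : ℕ × ℕ}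
    (hu : u ∈ cells lam mu) (hv : v ∈ cells lam mu) (h : content v = content u + 1) :
    (v.1 = u.1 ∧ v.2 = u.2 + 1) ∨ (v.1 + 1 = u.1 ∧ v.2 = u.2) := by
  obtain ⟨a, b⟩ := u; obtain ⟨c, d⟩ := v
  simp only [content] at h
  rcases lt_trichotomy a c with hac | rfl | hac
  · have hbd : b + 1 ≤ d := by omega
    exact absurd ⟨hu, rect' hlam hmu hu hv (by omega) (by omega) (by omega) (by omega),
      rect' hlam hmu hu hv (by omega) (by omega) (by omega) (by omega),
      rect' hlam hmu hu hv (by omega) (by omega) (by omega) (by omega)⟩ (no2 a b)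
  · exact Or.inl ⟨rfl, by omega⟩
  · rcases Nat.lt_or_ge c (a - 1) with hc2 | hc2
    · have : d + 1 ≤ b := by omega
      exact absurd ⟨hv, rect' hlam hmu hv hu (by omega) (by omega) (by omega) (by omega),
        rect' hlam hmu hv hu (by omega) (by omega) (by omega) (by omega),
        rect' hlam hmu hv hu (by omega) (by omega) (by omega) (by omega)⟩ (no2 c d)
    · exact Or.inr ⟨by omega, by omega⟩

private lemma adj_content' {p q : ℕ × ℕ} (h : CellAdj p q) :
    content q = content p + 1 ∨ content q = content p - 1 := by
  obtain ⟨a, b⟩ := p; obtain ⟨c, d⟩ := q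
  simp only [CellAdj, content] at *
  omega

private lemma interval' {C : Finset (ℕ × ℕ)} (conn : ConnectedCells C) {u v : ℕ × ℕ}
    (hu : u ∈ C) (hv : v ∈ C) {c : ℤ} (h1 : content u ≤ c) (h2 : c ≤ content v) :
    ∃ w ∈ C, content w = c := by
  have hpath := conn u hu v hv
  clear hv
  revert h2
  induction hpath with
  | refl => exact fun h2 => ⟨u, hu, le_antisymm h1 h2⟩
  | @tail b w hpath hstep ih =>
    intro h2
    obtain ⟨hbC, hwC, hadj⟩ := hstep
    rcases le_or_gt c (content b) with hc | hc
    · exact ih hc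
    · rcases adj_content' hadj with h | h
      · exact ⟨w, hwC, by omega⟩
      · omega

private lemma fin2cases : ∀ x : Fin 2, x = 0 ∨ x = 1 := by decide
private lemma fin2le1 : ∀ x : Fin 2, x ≤ 1 := by decide
private lemma fin2up : ∀ x y : Fin 2, x ≤ y → x = 1 → y = 1 := by decide
private lemma fin2down : ∀ x y : Fin 2, x ≤ y → y = 0 → x = 0 := by decide

/-- The candidate fillings in the case where `0` is unprimed and `1` is primed:
every box with a box above it must contain `1`, every box with a box to its right
must contain `0`, and the remaining (maximal-content) box contains `k`. -/
private def TA (C : Finset (ℕ × ℕ)) (k : Fin 2) (u : {p // p ∈ C}) : Fin 2 :=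
  if 1 ≤ u.1.1 ∧ (u.1.1 - 1, u.1.2) ∈ C then 1
  else if (u.1.1, u.1.2 + 1) ∈ C then 0 else k

/-- The candidate fillings in the case where `0` is primed and `1` is unprimed:
every box with a box to its left must contain `1`, every box with a box below it
must contain `0`, and the remaining (minimal-content) box contains `k`. -/
private def TB (C : Finset (ℕ × ℕ)) (k : Fin 2) (u : {p // p ∈ C}) : Fin 2 :=
  if 1 ≤ u.1.2 ∧ (u.1.1, u.1.2 - 1) ∈ C then 1
  else if (u.1.1 + 1, u.1.2) ∈ C then 0 else k

private lemma forceA1 {lam mu : List ℕ} {prm : Fin 2 → Bool} (hp0 : prm 0 = false)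
    {T : {p // p ∈ cells lam mu} → Fin 2} (hst : IsSuperTab (cells lam mu) prm T)
    (u : {p // p ∈ cells lam mu}) (h1 : 1 ≤ u.1.1)
    (h2 : (u.1.1 - 1, u.1.2) ∈ cells lam mu) : T u = 1 := by
  set w : {p // p ∈ cells lam mu} := ⟨(u.1.1 - 1, u.1.2), h2⟩ with hw
  have hle : T w ≤ T u := hst.2.1 w u rfl (Nat.sub_le _ _)
  rcases fin2cases (T u) with hu0 | hu1
  · have hw0 : T w = 0 := fin2down _ _ hle hu0
    exact absurd (hu0.trans hw0.symm)
      (hst.2.2.1 u w rfl (by simp only [hw]; omega) (by rw [hu0, hp0]))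
  · exact hu1

private lemma forceA0 {lam mu : List ℕ} {prm : Fin 2 → Bool} (hp1 : prm 1 = true)
    {T : {p // p ∈ cells lam mu} → Fin 2} (hst : IsSuperTab (cells lam mu) prm T)
    (u : {p // p ∈ cells lam mu}) (h2 : (u.1.1, u.1.2 + 1) ∈ cells lam mu) : T u = 0 := by
  set w : {p // p ∈ cells lam mu} := ⟨(u.1.1, u.1.2 + 1), h2⟩ with hw
  have hle : T u ≤ T w := hst.1 u w rfl (Nat.le_succ _)
  rcases fin2cases (T u) with hu0 | hu1
  · exact hu0
  · have hw1 : T w = 1 := fin2up _ _ hle hu1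
    exact absurd (hu1.trans hw1.symm)
      (hst.2.2.2 u w rfl (by simp only [hw]; omega) (by rw [hu1, hp1]))

private lemma forceB1 {lam mu : List ℕ} {prm : Fin 2 → Bool} (hp0 : prm 0 = true)
    {T : {p // p ∈ cells lam mu} → Fin 2} (hst : IsSuperTab (cells lam mu) prm T)
    (u : {p // p ∈ cells lam mu}) (h1 : 1 ≤ u.1.2)
    (h2 : (u.1.1, u.1.2 - 1) ∈ cells lam mu) : T u = 1 := by
  set w : {p // p ∈ cells lam mu} := ⟨(u.1.1, u.1.2 - 1), h2⟩ with hw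
  have hle : T w ≤ T u := hst.1 w u rfl (Nat.sub_le _ _)
  rcases fin2cases (T u) with hu0 | hu1
  · have hw0 : T w = 0 := fin2down _ _ hle hu0
    exact absurd (hu0.trans hw0.symm)
      (hst.2.2.2 u w rfl (by simp only [hw]; omega) (by rw [hu0, hp0]))
  · exact hu1

private lemma forceB0 {lam mu : List ℕ} {prm : Fin 2 → Bool} (hp1 : prm 1 = false)
    {T : {p // p ∈ cells lam mu} → Fin 2} (hst : IsSuperTab (cells lam mu) prm T)
    (u : {p // p ∈ cells lam mu}) (h2 : (u.1.1 + 1, u.1.2) ∈ cells lam mu) : T u = 0 := by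
  set w : {p // p ∈ cells lam mu} := ⟨(u.1.1 + 1, u.1.2), h2⟩ with hw
  have hle : T u ≤ T w := hst.2.1 u w rfl (Nat.le_succ _)
  rcases fin2cases (T u) with hu0 | hu1
  · exact hu0
  · have hw1 : T w = 1 := fin2up _ _ hle hu1
    exact absurd (hu1.trans hw1.symm)
      (hst.2.2.1 u w rfl (by simp only [hw]; omega) (by rw [hu1, hp1]))

private lemma tabA {lam mu : List ℕ} (hlam : lam.Pairwise (· ≥ ·)) (hmu : mu.Pairwise (· ≥ ·))
    (no2 : NoTwoByTwo (cells lam mu)) {prm : Fin 2 → Bool}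
    (hp0 : prm 0 = false) (hp1 : prm 1 = true) (k : Fin 2) :
    IsSuperTab (cells lam mu) prm (TA (cells lam mu) k) := by
  have rowclaim : ∀ u v : {p // p ∈ cells lam mu}, u.1.1 = v.1.1 → u.1.2 < v.1.2 →
      TA (cells lam mu) k u = 0 := by
    rintro ⟨⟨a, b⟩, hu⟩ ⟨⟨a', b'⟩, hv⟩ h1 h2
    simp only at h1 h2
    subst h1
    have hR : (a, b + 1) ∈ cells lam mu :=
      rect' hlam hmu hu hv le_rfl le_rfl (by omega) (by omega)
    have hnA : ¬(1 ≤ a ∧ (a - 1, b) ∈ cells lam mu) := by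
      rintro ⟨ha, hab⟩
      have h2' : (a - 1, b + 1) ∈ cells lam mu :=
        rect' hlam hmu hab hR le_rfl (by omega) (by omega) le_rfl
      have e : a - 1 + 1 = a := by omega
      exact no2 (a - 1) b ⟨hab, by rw [e]; exact hu, h2', by rw [e]; exact hR⟩
    simp only [TA]
    rw [if_neg hnA, if_pos hR]
  have colclaim : ∀ u v : {p // p ∈ cells lam mu}, u.1.2 = v.1.2 → u.1.1 < v.1.1 →
      TA (cells lam mu) k v = 1 := by
    rintro ⟨⟨a, b⟩, hu⟩ ⟨⟨a', b'⟩, hv⟩ h1 h2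
    simp only at h1 h2
    subst h1
    have hA : (a' - 1, b) ∈ cells lam mu :=
      rect' hlam hmu hu hv (by omega) (by omega) le_rfl le_rfl
    simp only [TA]
    rw [if_pos ⟨by omega, hA⟩]
  refine ⟨?_, ?_, ?_, ?_⟩
  · intro u v h1 h2
    rcases eq_or_lt_of_le h2 with he | hlt
    · have : u = v := Subtype.ext (Prod.ext_iff.mpr ⟨h1, he⟩)
      rw [this]
    · rw [rowclaim u v h1 hlt]
      exact Fin.zero_le _
  · intro u v h1 h2
    rcases eq_or_lt_of_le h2 with he | hlt
    · have : u = v := Subtype.ext (Prod.ext_iff.mpr ⟨he, h1⟩)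
      rw [this]
    · rw [colclaim u v h1 hlt]
      exact fin2le1 _
  · intro u v h1 h2 hpf
    have hu0 : TA (cells lam mu) k u = 0 := by
      rcases fin2cases (TA (cells lam mu) k u) with h | h
      · exact h
      · rw [h, hp1] at hpf; cases hpf
    rcases Nat.lt_or_ge u.1.1 v.1.1 with hlt | hge
    · rw [hu0, colclaim u v h1 hlt]
      decide
    · have hlt : v.1.1 < u.1.1 := lt_of_le_of_ne hge (fun e => h2 e.symm)
      have h1' := colclaim v u h1.symm hlt
      rw [h1'] at hu0
      exact absurd hu0 (by decide)
  · intro u v h1 h2 hpt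
    have hu1 : TA (cells lam mu) k u = 1 := by
      rcases fin2cases (TA (cells lam mu) k u) with h | h
      · rw [h, hp0] at hpt; cases hpt
      · exact h
    rcases Nat.lt_or_ge u.1.2 v.1.2 with hlt | hge
    · have h0' := rowclaim u v h1 hlt
      rw [h0'] at hu1
      exact absurd hu1 (by decide)
    · have hlt : v.1.2 < u.1.2 := lt_of_le_of_ne hge (fun e => h2 e.symm)
      rw [hu1, rowclaim v u h1.symm hlt]
      decide

private lemma tabB {lam mu : List ℕ} (hlam : lam.Pairwise (· ≥ ·)) (hmu : mu.Pairwise (· ≥ ·))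
    (no2 : NoTwoByTwo (cells lam mu)) {prm : Fin 2 → Bool}
    (hp0 : prm 0 = true) (hp1 : prm 1 = false) (k : Fin 2) :
    IsSuperTab (cells lam mu) prm (TB (cells lam mu) k) := by
  have colclaim : ∀ u v : {p // p ∈ cells lam mu}, u.1.2 = v.1.2 → u.1.1 < v.1.1 →
      TB (cells lam mu) k u = 0 := by
    rintro ⟨⟨a, b⟩, hu⟩ ⟨⟨a', b'⟩, hv⟩ h1 h2
    simp only at h1 h2
    subst h1
    have hB : (a + 1, b) ∈ cells lam mu :=
      rect' hlam hmu hu hv (by omega) (by omega) le_rfl le_rfl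
    have hnL : ¬(1 ≤ b ∧ (a, b - 1) ∈ cells lam mu) := by
      rintro ⟨hb, hab⟩
      have h2' : (a + 1, b - 1) ∈ cells lam mu :=
        rect' hlam hmu hab hv (by omega) (by omega) le_rfl (by omega)
      have e : b - 1 + 1 = b := by omega
      exact no2 a (b - 1) ⟨hab, h2', by rw [e]; exact hu, by rw [e]; exact hB⟩
    simp only [TB]
    rw [if_neg hnL, if_pos hB]
  have rowclaim : ∀ u v : {p // p ∈ cells lam mu}, u.1.1 = v.1.1 → u.1.2 < v.1.2 →
      TB (cells lam mu) k v = 1 := by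
    rintro ⟨⟨a, b⟩, hu⟩ ⟨⟨a', b'⟩, hv⟩ h1 h2
    simp only at h1 h2
    subst h1
    have hL : (a, b' - 1) ∈ cells lam mu :=
      rect' hlam hmu hu hv le_rfl le_rfl (by omega) (by omega)
    simp only [TB]
    rw [if_pos ⟨by omega, hL⟩]
  refine ⟨?_, ?_, ?_, ?_⟩
  · intro u v h1 h2
    rcases eq_or_lt_of_le h2 with he | hlt
    · have : u = v := Subtype.ext (Prod.ext_iff.mpr ⟨h1, he⟩)
      rw [this]
    · rw [rowclaim u v h1 hlt]
      exact fin2le1 _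
  · intro u v h1 h2
    rcases eq_or_lt_of_le h2 with he | hlt
    · have : u = v := Subtype.ext (Prod.ext_iff.mpr ⟨he, h1⟩)
      rw [this]
    · rw [colclaim u v h1 hlt]
      exact Fin.zero_le _
  · intro u v h1 h2 hpf
    have hu1 : TB (cells lam mu) k u = 1 := by
      rcases fin2cases (TB (cells lam mu) k u) with h | h
      · rw [h, hp0] at hpf; cases hpf
      · exact h
    rcases Nat.lt_or_ge u.1.1 v.1.1 with hlt | hge
    · have h0' := colclaim u v h1 hlt
      rw [h0'] at hu1
      exact absurd hu1 (by decide)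
    · have hlt : v.1.1 < u.1.1 := lt_of_le_of_ne hge (fun e => h2 e.symm)
      rw [hu1, colclaim v u h1.symm hlt]
      decide
  · intro u v h1 h2 hpt
    have hu0 : TB (cells lam mu) k u = 0 := by
      rcases fin2cases (TB (cells lam mu) k u) with h | h
      · exact h
      · rw [h, hp1] at hpt; cases hpt
    rcases Nat.lt_or_ge u.1.2 v.1.2 with hlt | hge
    · rw [hu0, rowclaim u v h1 hlt]
      decide
    · have hlt : v.1.2 < u.1.2 := lt_of_le_of_ne hge (fun e => h2 e.symm)
      have h1' := rowclaim v u h1.symm hlt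
      rw [h1'] at hu0
      exact absurd hu0 (by decide)

open Classical in
private lemma countA (lam mu : List ℕ) (hlam : lam.Pairwise (· ≥ ·)) (hmu : mu.Pairwise (· ≥ ·))
    (hrib : IsRibbon (cells lam mu)) (prm : Fin 2 → Bool)
    (hp0 : prm 0 = false) (hp1 : prm 1 = true) :
    (Finset.univ.filter fun T : {p // p ∈ cells lam mu} → Fin 2 =>
      IsSuperTab (cells lam mu) prm T).card = 2 := by
  obtain ⟨hne, conn, no2⟩ := hrib
  obtain ⟨b, hbC, hbmax⟩ := Finset.exists_max_image (cells lam mu) content hne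
  have hbA : ¬(1 ≤ b.1 ∧ (b.1 - 1, b.2) ∈ cells lam mu) := by
    rintro ⟨h1, h2⟩
    have := hbmax _ h2
    simp only [content] at this
    omega
  have hbR : (b.1, b.2 + 1) ∉ cells lam mu := by
    intro h
    have := hbmax _ h
    simp only [content] at this
    omega
  have hTAb : ∀ k, TA (cells lam mu) k ⟨b, hbC⟩ = k := by
    intro k
    simp only [TA]
    rw [if_neg hbA, if_neg hbR]
  have hsub : ∀ T : {p // p ∈ cells lam mu} → Fin 2, IsSuperTab (cells lam mu) prm T →
      T = TA (cells lam mu) (T ⟨b, hbC⟩) := by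
    intro T hst
    funext u
    by_cases hA : 1 ≤ u.1.1 ∧ (u.1.1 - 1, u.1.2) ∈ cells lam mu
    · rw [forceA1 hp0 hst u hA.1 hA.2]
      simp only [TA]
      rw [if_pos hA]
    · by_cases hR : (u.1.1, u.1.2 + 1) ∈ cells lam mu
      · rw [forceA0 hp1 hst u hR]
        simp only [TA]
        rw [if_neg hA, if_pos hR]
      · have hub : u.1 = b := by
          refine content_inj' hlam hmu no2 u.2 hbC ?_
          by_contra hne2
          have hlt : content u.1 < content b := lt_of_le_of_ne (hbmax _ u.2) hne2
          obtain ⟨w, hwC, hwc⟩ :=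
            interval' conn u.2 hbC (le_of_lt (lt_add_one (content u.1)))
              (by omega : content u.1 + 1 ≤ content b)
          rcases succ_adj' hlam hmu no2 u.2 hwC hwc with ⟨e1, e2⟩ | ⟨e1, e2⟩
          · exact hR (by rw [show (u.1.1, u.1.2 + 1) = w from Prod.ext_iff.mpr
              ⟨e1.symm, e2.symm⟩]; exact hwC)
          · exact hA ⟨by omega, by rw [show (u.1.1 - 1, u.1.2) = w from Prod.ext_iff.mpr
              ⟨by omega, e2.symm⟩]; exact hwC⟩
        have hub' : u = ⟨b, hbC⟩ := Subtype.ext hub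
        rw [hub', hTAb]
  have hset : (Finset.univ.filter fun T : {p // p ∈ cells lam mu} → Fin 2 =>
      IsSuperTab (cells lam mu) prm T) = {TA (cells lam mu) 0, TA (cells lam mu) 1} := by
    apply Finset.Subset.antisymm
    · intro T hT
      have hst := (Finset.mem_filter.mp hT).2
      have hTeq := hsub T hst
      rcases fin2cases (T ⟨b, hbC⟩) with h | h
      · rw [h] at hTeq
        exact Finset.mem_insert.mpr (Or.inl hTeq)
      · rw [h] at hTeq
        exact Finset.mem_insert.mpr (Or.inr (Finset.mem_singleton.mpr hTeq))
    · intro T hT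
      rcases Finset.mem_insert.mp hT with rfl | h
      · exact Finset.mem_filter.mpr ⟨Finset.mem_univ _, tabA hlam hmu no2 hp0 hp1 0⟩
      · rw [Finset.mem_singleton.mp h]
        exact Finset.mem_filter.mpr ⟨Finset.mem_univ _, tabA hlam hmu no2 hp0 hp1 1⟩
  rw [hset]
  refine Finset.card_pair ?_
  intro h
  have := congrFun h ⟨b, hbC⟩
  rw [hTAb, hTAb] at this
  exact absurd this (by decide)

open Classical in
private lemma countB (lam mu : List ℕ) (hlam : lam.Pairwise (· ≥ ·)) (hmu : mu.Pairwise (· ≥ ·))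
    (hrib : IsRibbon (cells lam mu)) (prm : Fin 2 → Bool)
    (hp0 : prm 0 = true) (hp1 : prm 1 = false) :
    (Finset.univ.filter fun T : {p // p ∈ cells lam mu} → Fin 2 =>
      IsSuperTab (cells lam mu) prm T).card = 2 := by
  obtain ⟨hne, conn, no2⟩ := hrib
  obtain ⟨b, hbC, hbmin⟩ := Finset.exists_min_image (cells lam mu) content hne
  have hbL : ¬(1 ≤ b.2 ∧ (b.1, b.2 - 1) ∈ cells lam mu) := by
    rintro ⟨h1, h2⟩
    have := hbmin _ h2
    simp only [content] at this
    omega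
  have hbB : (b.1 + 1, b.2) ∉ cells lam mu := by
    intro h
    have := hbmin _ h
    simp only [content] at this
    omega
  have hTBb : ∀ k, TB (cells lam mu) k ⟨b, hbC⟩ = k := by
    intro k
    simp only [TB]
    rw [if_neg hbL, if_neg hbB]
  have hsub : ∀ T : {p // p ∈ cells lam mu} → Fin 2, IsSuperTab (cells lam mu) prm T →
      T = TB (cells lam mu) (T ⟨b, hbC⟩) := by
    intro T hst
    funext u
    by_cases hL : 1 ≤ u.1.2 ∧ (u.1.1, u.1.2 - 1) ∈ cells lam mu
    · rw [forceB1 hp0 hst u hL.1 hL.2]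
      simp only [TB]
      rw [if_pos hL]
    · by_cases hB : (u.1.1 + 1, u.1.2) ∈ cells lam mu
      · rw [forceB0 hp1 hst u hB]
        simp only [TB]
        rw [if_neg hL, if_pos hB]
      · have hub : u.1 = b := by
          refine content_inj' hlam hmu no2 u.2 hbC ?_
          by_contra hne2
          have hlt : content b < content u.1 :=
            lt_of_le_of_ne (hbmin _ u.2) (fun e => hne2 e.symm)
          obtain ⟨w, hwC, hwc⟩ :=
            interval' conn hbC u.2 (by omega : content b ≤ content u.1 - 1)
              (by omega : content u.1 - 1 ≤ content u.1)
          have hwc' : content u.1 = content w + 1 := by omega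
          rcases succ_adj' hlam hmu no2 hwC u.2 hwc' with ⟨e1, e2⟩ | ⟨e1, e2⟩
          · refine hL ⟨by omega, ?_⟩
            have e3 : (u.1.1, u.1.2 - 1) = w := Prod.ext_iff.mpr ⟨e1, by omega⟩
            rw [e3]; exact hwC
          · refine hB ?_
            have e3 : (u.1.1 + 1, u.1.2) = w := Prod.ext_iff.mpr ⟨e1, e2⟩
            rw [e3]; exact hwC
        have hub' : u = ⟨b, hbC⟩ := Subtype.ext hub
        rw [hub', hTBb]
  have hset : (Finset.univ.filter fun T : {p // p ∈ cells lam mu} → Fin 2 =>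
      IsSuperTab (cells lam mu) prm T) = {TB (cells lam mu) 0, TB (cells lam mu) 1} := by
    apply Finset.Subset.antisymm
    · intro T hT
      have hst := (Finset.mem_filter.mp hT).2
      have hTeq := hsub T hst
      rcases fin2cases (T ⟨b, hbC⟩) with h | h
      · rw [h] at hTeq
        exact Finset.mem_insert.mpr (Or.inl hTeq)
      · rw [h] at hTeq
        exact Finset.mem_insert.mpr (Or.inr (Finset.mem_singleton.mpr hTeq))
    · intro T hT
      rcases Finset.mem_insert.mp hT with rfl | h
      · exact Finset.mem_filter.mpr ⟨Finset.mem_univ _, tabB hlam hmu no2 hp0 hp1 0⟩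
      · rw [Finset.mem_singleton.mp h]
        exact Finset.mem_filter.mpr ⟨Finset.mem_univ _, tabB hlam hmu no2 hp0 hp1 1⟩
  rw [hset]
  refine Finset.card_pair ?_
  intro h
  have := congrFun h ⟨b, hbC⟩
  rw [hTBb, hTBb] at this
  exact absurd this (by decide)

end TwoFillings

open Classical in
/-- **Two-filling enumeration for ribbons**: if `θ = F^{λ/μ}` is a nonempty ribbon
(edgewise connected with no 2×2 block of boxes) and `R′` is a marked alphabet on
`{1,2}` with exactly one unprimed and one primed letter (in either order), then
there are exactly two skew supertableaux of shape `θ` over `R′`. -/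
theorem ribbon_two_fillings (lam mu : List ℕ) (hlam : IsPartition lam) (hmu : IsPartition mu)
    (hsub : Contained mu lam) (hrib : IsRibbon (cells lam mu))
    (prm : Fin 2 → Bool) (hprm : prm 0 ≠ prm 1) :
    (Finset.univ.filter fun T : {p // p ∈ cells lam mu} → Fin 2 =>
      IsSuperTab (cells lam mu) prm T).card = 2 := by
  cases h0 : prm 0 <;> cases h1 : prm 1
  · exact absurd (h0.trans h1.symm) hprm
  · exact countA lam mu hlam.1 hmu.1 hrib prm h0 h1
  · exact countB lam mu hlam.1 hmu.1 hrib prm h0 h1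
  · exact absurd (h0.trans h1.symm) hprm

end SuperSchur
end

section
/- Ribbon cancellation lemma (key step in the proof of Proposition 4.3(iv)): let θ be a nonempty ribbon and let R′ be a marked alphabet on R = {1,2} with exactly one unprimed letter carrying the variable x and one primed letter carrying the variable y (in either order). Then for every doubly infinite family a = (a_t)_{t∈ℤ} in a commutative ring A and every t ∈ A, the substitution x = t, y = −t makes the factorial weight sum Σ_{T∈𝒯^{θ}_{R′}} ∏_{(i,j)∈θ} wgt(t_{ij}) equal to 0; equivalently, this sum, as a polynomial in x and y over A, is divisible by (x + y). -/
namespace SuperSchur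

variable {A : Type*} [CommRing A]

/-! ### Auxiliary lemmas for the ribbon cancellation theorem -/

private lemma fin2_cases (r : Fin (1 + 1)) : r = 0 ∨ r = 1 := by
  fin_cases r <;> simp

private lemma fin2_le_one (r : Fin (1 + 1)) : r ≤ 1 := by fin_cases r <;> decide

private lemma fin2_zero_le (r : Fin (1 + 1)) : (0 : Fin (1 + 1)) ≤ r := by fin_cases r <;> decide

private lemma fin2_add_one_ne (r : Fin (1 + 1)) : r + 1 ≠ r := by fin_cases r <;> decide

private lemma fin2_add_one_add_one (r : Fin (1 + 1)) : r + 1 + 1 = r := by fin_cases r <;> decide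

/-- Flipping the entry of the maximal-content cell preserves supertableaux when the
unprimed letter is `0` and the primed letter is `1`. -/
private lemma validA (C : Finset (ℕ × ℕ)) (prm : Fin (1 + 1) → Bool)
    (h0 : prm 0 = false) (h1 : prm 1 = true)
    (u0 : {p // p ∈ C}) (hmax : ∀ v : {p // p ∈ C}, content v.1 ≤ content u0.1)
    (T : {p // p ∈ C} → Fin (1 + 1)) (hT : IsSuperTab C prm T) :
    IsSuperTab C prm (fun u => if u = u0 then T u + 1 else T u) := by
  classical
  obtain ⟨hc1, hc2, hc3, hc4⟩ := hT
  have hright : ∀ v : {p // p ∈ C}, v.1.1 = u0.1.1 → v.1.2 ≤ u0.1.2 := by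
    intro v hrow
    have := hmax v
    simp only [content] at this
    omega
  have htop : ∀ v : {p // p ∈ C}, v.1.2 = u0.1.2 → u0.1.1 ≤ v.1.1 := by
    intro v hcol
    have := hmax v
    simp only [content] at this
    omega
  have hext : ∀ v : {p // p ∈ C}, v.1.1 = u0.1.1 → v.1.2 = u0.1.2 → v = u0 := by
    intro v hr hcx
    exact Subtype.ext (Prod.ext hr hcx)
  have rowFact : ∀ v : {p // p ∈ C}, v ≠ u0 → v.1.1 = u0.1.1 → T v = 0 := by
    intro v hv hrow
    have hle : T v ≤ T u0 := hc1 v u0 hrow (hright v hrow)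
    rcases fin2_cases (T u0) with h | h
    · rcases fin2_cases (T v) with h' | h'
      · exact h'
      · rw [h, h'] at hle; exact absurd hle (by decide)
    · have hnecol : u0.1.2 ≠ v.1.2 := fun hcx => hv (hext v hrow hcx.symm)
      have hne := hc4 u0 v hrow.symm hnecol (by rw [h, h1])
      rcases fin2_cases (T v) with h' | h'
      · exact h'
      · exact absurd (h.trans h'.symm) hne
  have colFact : ∀ v : {p // p ∈ C}, v ≠ u0 → v.1.2 = u0.1.2 → T v = 1 := by
    intro v hv hcol
    have hle : T u0 ≤ T v := hc2 u0 v hcol.symm (htop v hcol)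
    rcases fin2_cases (T u0) with h | h
    · have hnerow : u0.1.1 ≠ v.1.1 := fun hr => hv (hext v hr.symm hcol)
      have hne := hc3 u0 v hcol.symm hnerow (by rw [h, h0])
      rcases fin2_cases (T v) with h' | h'
      · exact absurd (h.trans h'.symm) hne
      · exact h'
    · rcases fin2_cases (T v) with h' | h'
      · rw [h, h'] at hle; exact absurd hle (by decide)
      · exact h'
  refine ⟨?_, ?_, ?_, ?_⟩
  · intro u v hr hle
    beta_reduce
    by_cases hu : u0 = u
    · subst hu
      by_cases hv : u0 = v
      · subst hv; exact le_refl _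
      · have hv' : v ≠ u0 := fun h => hv h.symm
        exact absurd (hext v hr.symm (le_antisymm (hright v hr.symm) hle)) hv'
    · have hu' : u ≠ u0 := fun h => hu h.symm
      by_cases hv : u0 = v
      · subst hv
        rw [if_neg hu', if_pos rfl]
        rw [rowFact u hu' hr]
        exact fin2_zero_le _
      · have hv' : v ≠ u0 := fun h => hv h.symm
        rw [if_neg hu', if_neg hv']; exact hc1 u v hr hle
  · intro u v hcx hle
    beta_reduce
    by_cases hu : u0 = u
    · subst hu
      by_cases hv : u0 = v
      · subst hv; exact le_refl _
      · have hv' : v ≠ u0 := fun h => hv h.symm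
        rw [if_pos rfl, if_neg hv']
        rw [colFact v hv' hcx.symm]
        exact fin2_le_one _
    · have hu' : u ≠ u0 := fun h => hu h.symm
      by_cases hv : u0 = v
      · subst hv
        exact absurd (hext u (le_antisymm hle (htop u hcx)) hcx) hu'
      · have hv' : v ≠ u0 := fun h => hv h.symm
        rw [if_neg hu', if_neg hv']; exact hc2 u v hcx hle
  · intro u v hcx hne hp
    beta_reduce at hp ⊢
    by_cases hu : u0 = u
    · subst hu
      by_cases hv : u0 = v
      · subst hv; exact absurd rfl hne
      · have hv' : v ≠ u0 := fun h => hv h.symm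
        rw [if_pos rfl] at hp ⊢
        rw [if_neg hv']
        rw [colFact v hv' hcx.symm]
        rcases fin2_cases (T u0 + 1) with h | h
        · rw [h]; decide
        · rw [h, h1] at hp; exact absurd hp (by decide)
    · have hu' : u ≠ u0 := fun h => hu h.symm
      by_cases hv : u0 = v
      · subst hv
        rw [if_neg hu'] at hp
        rw [colFact u hu' hcx, h1] at hp
        exact absurd hp (by decide)
      · have hv' : v ≠ u0 := fun h => hv h.symm
        rw [if_neg hu'] at hp
        rw [if_neg hu', if_neg hv']
        exact hc3 u v hcx hne hp
  · intro u v hr hne hp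
    beta_reduce at hp ⊢
    by_cases hu : u0 = u
    · subst hu
      by_cases hv : u0 = v
      · subst hv; exact absurd rfl hne
      · have hv' : v ≠ u0 := fun h => hv h.symm
        rw [if_pos rfl] at hp ⊢
        rw [if_neg hv']
        rw [rowFact v hv' hr.symm]
        rcases fin2_cases (T u0 + 1) with h | h
        · rw [h, h0] at hp; exact absurd hp (by decide)
        · rw [h]; decide
    · have hu' : u ≠ u0 := fun h => hu h.symm
      by_cases hv : u0 = v
      · subst hv
        rw [if_neg hu'] at hp
        rw [rowFact u hu' hr, h0] at hp
        exact absurd hp (by decide)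
      · have hv' : v ≠ u0 := fun h => hv h.symm
        rw [if_neg hu'] at hp
        rw [if_neg hu', if_neg hv']
        exact hc4 u v hr hne hp

/-- Flipping the entry of the minimal-content cell preserves supertableaux when the
primed letter is `0` and the unprimed letter is `1`. -/
private lemma validB (C : Finset (ℕ × ℕ)) (prm : Fin (1 + 1) → Bool)
    (h0 : prm 0 = true) (h1 : prm 1 = false)
    (u0 : {p // p ∈ C}) (hmin : ∀ v : {p // p ∈ C}, content u0.1 ≤ content v.1)
    (T : {p // p ∈ C} → Fin (1 + 1)) (hT : IsSuperTab C prm T) :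
    IsSuperTab C prm (fun u => if u = u0 then T u + 1 else T u) := by
  classical
  obtain ⟨hc1, hc2, hc3, hc4⟩ := hT
  have hleft : ∀ v : {p // p ∈ C}, v.1.1 = u0.1.1 → u0.1.2 ≤ v.1.2 := by
    intro v hrow
    have := hmin v
    simp only [content] at this
    omega
  have hbot : ∀ v : {p // p ∈ C}, v.1.2 = u0.1.2 → v.1.1 ≤ u0.1.1 := by
    intro v hcol
    have := hmin v
    simp only [content] at this
    omega
  have hext : ∀ v : {p // p ∈ C}, v.1.1 = u0.1.1 → v.1.2 = u0.1.2 → v = u0 := by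
    intro v hr hcx
    exact Subtype.ext (Prod.ext hr hcx)
  have rowFact : ∀ v : {p // p ∈ C}, v ≠ u0 → v.1.1 = u0.1.1 → T v = 1 := by
    intro v hv hrow
    have hle : T u0 ≤ T v := hc1 u0 v hrow.symm (hleft v hrow)
    rcases fin2_cases (T u0) with h | h
    · have hnecol : u0.1.2 ≠ v.1.2 := fun hcx => hv (hext v hrow hcx.symm)
      have hne := hc4 u0 v hrow.symm hnecol (by rw [h, h0])
      rcases fin2_cases (T v) with h' | h'
      · exact absurd (h.trans h'.symm) hne
      · exact h'
    · rcases fin2_cases (T v) with h' | h'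
      · rw [h, h'] at hle; exact absurd hle (by decide)
      · exact h'
  have colFact : ∀ v : {p // p ∈ C}, v ≠ u0 → v.1.2 = u0.1.2 → T v = 0 := by
    intro v hv hcol
    have hle : T v ≤ T u0 := hc2 v u0 hcol (hbot v hcol)
    rcases fin2_cases (T u0) with h | h
    · rcases fin2_cases (T v) with h' | h'
      · exact h'
      · rw [h, h'] at hle; exact absurd hle (by decide)
    · have hnerow : u0.1.1 ≠ v.1.1 := fun hr => hv (hext v hr.symm hcol)
      have hne := hc3 u0 v hcol.symm hnerow (by rw [h, h1])
      rcases fin2_cases (T v) with h' | h'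
      · exact h'
      · exact absurd (h.trans h'.symm) hne
  refine ⟨?_, ?_, ?_, ?_⟩
  · intro u v hr hle
    beta_reduce
    by_cases hu : u0 = u
    · subst hu
      by_cases hv : u0 = v
      · subst hv; exact le_refl _
      · have hv' : v ≠ u0 := fun h => hv h.symm
        rw [if_pos rfl, if_neg hv']
        rw [rowFact v hv' hr.symm]
        exact fin2_le_one _
    · have hu' : u ≠ u0 := fun h => hu h.symm
      by_cases hv : u0 = v
      · subst hv
        exact absurd (hext u hr (le_antisymm hle (hleft u hr))) hu'
      · have hv' : v ≠ u0 := fun h => hv h.symm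
        rw [if_neg hu', if_neg hv']; exact hc1 u v hr hle
  · intro u v hcx hle
    beta_reduce
    by_cases hu : u0 = u
    · subst hu
      by_cases hv : u0 = v
      · subst hv; exact le_refl _
      · have hv' : v ≠ u0 := fun h => hv h.symm
        exact absurd (hext v (le_antisymm (hbot v hcx.symm) hle) hcx.symm) hv'
    · have hu' : u ≠ u0 := fun h => hu h.symm
      by_cases hv : u0 = v
      · subst hv
        rw [if_neg hu', if_pos rfl]
        rw [colFact u hu' hcx]
        exact fin2_zero_le _
      · have hv' : v ≠ u0 := fun h => hv h.symm
        rw [if_neg hu', if_neg hv']; exact hc2 u v hcx hle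
  · intro u v hcx hne hp
    beta_reduce at hp ⊢
    by_cases hu : u0 = u
    · subst hu
      by_cases hv : u0 = v
      · subst hv; exact absurd rfl hne
      · have hv' : v ≠ u0 := fun h => hv h.symm
        rw [if_pos rfl] at hp ⊢
        rw [if_neg hv']
        rw [colFact v hv' hcx.symm]
        rcases fin2_cases (T u0 + 1) with h | h
        · rw [h, h0] at hp; exact absurd hp (by decide)
        · rw [h]; decide
    · have hu' : u ≠ u0 := fun h => hu h.symm
      by_cases hv : u0 = v
      · subst hv
        rw [if_neg hu'] at hp
        rw [colFact u hu' hcx, h0] at hp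
        exact absurd hp (by decide)
      · have hv' : v ≠ u0 := fun h => hv h.symm
        rw [if_neg hu'] at hp
        rw [if_neg hu', if_neg hv']
        exact hc3 u v hcx hne hp
  · intro u v hr hne hp
    beta_reduce at hp ⊢
    by_cases hu : u0 = u
    · subst hu
      by_cases hv : u0 = v
      · subst hv; exact absurd rfl hne
      · have hv' : v ≠ u0 := fun h => hv h.symm
        rw [if_pos rfl] at hp ⊢
        rw [if_neg hv']
        rw [rowFact v hv' hr.symm]
        rcases fin2_cases (T u0 + 1) with h | h
        · rw [h]; decide
        · rw [h, h1] at hp; exact absurd hp (by decide)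
    · have hu' : u ≠ u0 := fun h => hu h.symm
      by_cases hv : u0 = v
      · subst hv
        rw [if_neg hu'] at hp
        rw [rowFact u hu' hr, h1] at hp
        exact absurd hp (by decide)
      · have hv' : v ≠ u0 := fun h => hv h.symm
        rw [if_neg hu'] at hp
        rw [if_neg hu', if_neg hv']
        exact hc4 u v hr hne hp

/-- The sign-reversing involution argument: if the two letters carry opposite weights
and flipping the entry of a distinguished cell preserves supertableaux, then the
weighted sum over supertableaux vanishes. -/
private lemma sum_cancel (C : Finset (ℕ × ℕ))
    (prm : Fin (1 + 1) → Bool) (w : Fin (1 + 1) → ℤ → A)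
    (hw : ∀ (r : Fin (1 + 1)) (c : ℤ), w r c + w (r + 1) c = 0)
    (u0 : {p // p ∈ C})
    (hvalid : ∀ T : {p // p ∈ C} → Fin (1 + 1), IsSuperTab C prm T →
      IsSuperTab C prm (fun u => if u = u0 then T u + 1 else T u)) :
    tabSum C prm w = 0 := by
  classical
  unfold tabSum
  refine Finset.sum_involution
    (g := fun T _ => fun u => if u = u0 then T u + 1 else T u) ?_ ?_ ?_ ?_
  · intro T _
    rw [← Finset.mul_prod_erase Finset.univ _ (Finset.mem_univ u0),
        ← Finset.mul_prod_erase Finset.univ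
          (fun u => w ((if u = u0 then T u + 1 else T u)) (content u.1))
          (Finset.mem_univ u0)]
    have hrest : ∀ u ∈ Finset.univ.erase u0,
        w ((if u = u0 then T u + 1 else T u)) (content u.1) = w (T u) (content u.1) := by
      intro u hu
      rw [if_neg (Finset.ne_of_mem_erase hu)]
    rw [Finset.prod_congr rfl hrest, if_pos rfl, ← add_mul, hw, zero_mul]
  · intro T _ _
    intro h
    have := congrFun h u0
    simp only [if_pos rfl] at this
    exact fin2_add_one_ne _ this
  · intro T hT
    simp only [Finset.mem_filter, Finset.mem_univ, true_and] at hT ⊢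
    exact hvalid T hT
  · intro T _
    funext u
    by_cases hu : u = u0
    · subst hu; simp only [if_pos rfl]; exact fin2_add_one_add_one _
    · simp only [if_neg hu]

private lemma idx_eq_one (prm : Fin (1 + 1) → Bool) (hprm : prm 0 ≠ prm 1)
    (r : Fin (1 + 1)) : idx prm r = 1 := by
  rcases fin2_cases r with h | h <;> subst h <;>
    · unfold idx
      rw [Finset.card_filter, Fin.sum_univ_two]
      simp [hprm, hprm.symm, Fin.le_def]

/-- **Ribbon cancellation lemma** (key step in the proof of Proposition 4.3(iv)):
if `θ = F^{λ/μ}` is a nonempty ribbon and `R′` is a marked alphabet on `{1,2}` with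
exactly one unprimed letter carrying the variable `x` and one primed letter carrying
the variable `y` (in either order), then for every doubly infinite family `a` and every
`t`, the substitution `x = t`, `y = -t` makes the factorial weight sum vanish. -/
theorem ribbon_cancellation (lam mu : List ℕ) (hlam : IsPartition lam) (hmu : IsPartition mu)
    (hsub : Contained mu lam) (hrib : IsRibbon (cells lam mu))
    (prm : Fin (1 + 1) → Bool) (hprm : prm 0 ≠ prm 1) (a : ℤ → A) (t : A) :
    tabSum (cells lam mu) prm
      (wFact prm (fun _ : Fin 1 => t) (fun _ : Fin 1 => -t) a) = 0 := by
  classical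
  have hne : (cells lam mu).Nonempty := hrib.1
  have hidx : ∀ r : Fin (1 + 1), idx prm r = 1 := idx_eq_one prm hprm
  have hone : ((1 : Fin (1 + 1)) : Fin (1 + 1)) + 1 = 0 := by decide
  have hzero : ((0 : Fin (1 + 1)) : Fin (1 + 1)) + 1 = 1 := by decide
  rcases Bool.eq_false_or_eq_true (prm 0) with h0 | h0
  · -- prm 0 = true : letter 0 primed, letter 1 unprimed; flip at minimal content
    have h1 : prm 1 = false := by
      rcases Bool.eq_false_or_eq_true (prm 1) with h | h
      · exact absurd (h0.trans h.symm) hprm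
      · exact h
    have hs : ∀ r : Fin (1 + 1), sigma prm r = 0 := by
      intro r
      rcases fin2_cases r with h | h <;> subst h <;>
        · unfold sigma
          rw [Finset.card_filter, Fin.sum_univ_two, Finset.card_filter, Fin.sum_univ_two]
          simp [h0, h1, Fin.le_def]
    have hw01 : ∀ c : ℤ, wFact prm (fun _ : Fin 1 => t) (fun _ : Fin 1 => -t) a 0 c
        + wFact prm (fun _ : Fin 1 => t) (fun _ : Fin 1 => -t) a 1 c = 0 := by
      intro c
      unfold wFact
      rw [h0, h1, hidx, hidx, hs, hs]
      norm_num
    have hw : ∀ (r : Fin (1 + 1)) (c : ℤ),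
        wFact prm (fun _ : Fin 1 => t) (fun _ : Fin 1 => -t) a r c
        + wFact prm (fun _ : Fin 1 => t) (fun _ : Fin 1 => -t) a (r + 1) c = 0 := by
      intro r c
      rcases fin2_cases r with h | h <;> subst h
      · rw [hzero]; exact hw01 c
      · rw [hone, add_comm]; exact hw01 c
    obtain ⟨u, hu, hmin⟩ := Finset.exists_min_image (cells lam mu) content hne
    exact sum_cancel (cells lam mu) prm _ hw ⟨u, hu⟩
      (validB (cells lam mu) prm h0 h1 ⟨u, hu⟩ (fun v => hmin v.1 v.2))
  · -- prm 0 = false : letter 0 unprimed, letter 1 primed; flip at maximal content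
    have h1 : prm 1 = true := by
      rcases Bool.eq_false_or_eq_true (prm 1) with h | h
      · exact h
      · exact absurd (h0.trans h.symm) hprm
    have hs : ∀ r : Fin (1 + 1), sigma prm r = 1 := by
      intro r
      rcases fin2_cases r with h | h <;> subst h <;>
        · unfold sigma
          rw [Finset.card_filter, Fin.sum_univ_two, Finset.card_filter, Fin.sum_univ_two]
          simp [h0, h1, Fin.le_def]
    have hw01 : ∀ c : ℤ, wFact prm (fun _ : Fin 1 => t) (fun _ : Fin 1 => -t) a 0 c
        + wFact prm (fun _ : Fin 1 => t) (fun _ : Fin 1 => -t) a 1 c = 0 := by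
      intro c
      unfold wFact
      rw [h0, h1, hidx, hidx, hs, hs]
      norm_num
    have hw : ∀ (r : Fin (1 + 1)) (c : ℤ),
        wFact prm (fun _ : Fin 1 => t) (fun _ : Fin 1 => -t) a r c
        + wFact prm (fun _ : Fin 1 => t) (fun _ : Fin 1 => -t) a (r + 1) c = 0 := by
      intro r c
      rcases fin2_cases r with h | h <;> subst h
      · rw [hzero]; exact hw01 c
      · rw [hone, add_comm]; exact hw01 c
    obtain ⟨u, hu, hmax⟩ := Finset.exists_max_image (cells lam mu) content hne
    exact sum_cancel (cells lam mu) prm _ hw ⟨u, hu⟩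
      (validA (cells lam mu) prm h0 h1 ⟨u, hu⟩ (fun v => hmax v.1 v.2))

end SuperSchur
end
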